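/- Let M be a complex square matrix with ‖M‖ ≤ 1 (a contraction). Then ‖I − M‖ ≤ √(2 ‖I − Re M‖), where Re M = (M + M†)/2 and ‖·‖ is the operator norm. -/

import Mathlib

open scoped ComplexOrder Kronecker
open Matrix

noncomputable def opNorm {m n : Type*} [Fintype m] [Fintype n] [DecidableEq n]
    (A : Matrix m n ℂ) : ℝ :=
  ‖(Matrix.toEuclideanLin A).toContinuousLinearMap‖

noncomputable def traceNorm {n : Type*} [Fintype n] [DecidableEq n] (A : Matrix n n ℂ) : ℝ :=
  ((Matrix.posSemidef_conjTranspose_mul_self A).1.eigenvectorUnitary.1 *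
      diagonal (((↑) : ℝ → ℂ) ∘ Real.sqrt ∘ (Matrix.posSemidef_conjTranspose_mul_self A).1.eigenvalues) *
      (star (Matrix.posSemidef_conjTranspose_mul_self A).1.eigenvectorUnitary : Matrix n n ℂ)).trace.re

noncomputable def frobNorm {n : Type*} [Fintype n] (A : Matrix n n ℂ) : ℝ :=
  Real.sqrt ((Aᴴ * A).trace.re)

/-- The C⋆-algebra version of the result, for continuous linear endomorphisms of a
complex Hilbert space. -/
theorem clm_norm_one_sub_le_of_contraction {E : Type*} [NormedAddCommGroup E]
    [InnerProductSpace ℂ E] [CompleteSpace E] (T : E →L[ℂ] E) (hT : ‖T‖ ≤ 1) :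
    ‖1 - T‖ ≤ Real.sqrt (2 * ‖1 - (1/2 : ℂ) • (T + star T)‖) := by
  set c : E →L[ℂ] E := 1 - (1/2 : ℂ) • (T + star T) with hc
  set b : E →L[ℂ] E := 1 - T with hb
  have key : star b * b = (2:ℂ) • c - (1 - star T * T) := by
    simp only [hb, hc, star_sub, star_one, smul_sub, smul_smul]
    norm_num
    noncomm_ring
    module
  have hTT : star T * T ≤ 1 := by
    rw [← CStarAlgebra.norm_le_one_iff_of_nonneg _ (star_mul_self_nonneg T)]
    rw [CStarRing.norm_star_mul_self]
    nlinarith [norm_nonneg T]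
  have hle : star b * b ≤ (2:ℂ) • c := by
    rw [key]
    have : (0 : E →L[ℂ] E) ≤ 1 - star T * T := sub_nonneg.mpr hTT
    calc (2:ℂ) • c - (1 - star T * T) ≤ (2:ℂ) • c - 0 := sub_le_sub_left this _
      _ = (2:ℂ) • c := by rw [sub_zero]
  have hnorm : ‖b‖ * ‖b‖ ≤ 2 * ‖c‖ := by
    calc ‖b‖ * ‖b‖ = ‖star b * b‖ := (CStarRing.norm_star_mul_self).symm
      _ ≤ ‖(2:ℂ) • c‖ :=
          CStarAlgebra.norm_le_norm_of_nonneg_of_le (star_mul_self_nonneg b) hle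
      _ = 2 * ‖c‖ := by rw [norm_smul]; norm_num
  calc ‖b‖ = Real.sqrt (‖b‖ * ‖b‖) := (Real.sqrt_mul_self (norm_nonneg b)).symm
    _ ≤ Real.sqrt (2 * ‖c‖) := Real.sqrt_le_sqrt hnorm

/-- For a contraction `M`, `‖I − M‖ ≤ √(2‖I − Re M‖)`. -/
theorem norm_one_sub_le_of_contraction {d : ℕ} (M : Matrix (Fin d) (Fin d) ℂ)
    (hM : opNorm M ≤ 1) :
    opNorm (1 - M) ≤
      Real.sqrt (2 * opNorm (1 - (1/2 : ℂ) • (M + Mᴴ))) := by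
  have hop : ∀ A : Matrix (Fin d) (Fin d) ℂ,
      opNorm A = ‖Matrix.toEuclideanCLM (𝕜 := ℂ) A‖ := fun _ => rfl
  set T := Matrix.toEuclideanCLM (𝕜 := ℂ) M with hT
  have h1 : Matrix.toEuclideanCLM (𝕜 := ℂ) (1 - M) = 1 - T := by
    simp [hT]
  have h2 : Matrix.toEuclideanCLM (𝕜 := ℂ) (1 - (1/2 : ℂ) • (M + Mᴴ)) =
      1 - (1/2 : ℂ) • (T + star T) := by
    have : Mᴴ = star M := rfl
    simp [hT, this, _root_.map_smul, map_star]
  rw [hop, hop, h1, h2]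
  exact clm_norm_one_sub_le_of_contraction T (by rw [← hop]; exact hM)
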